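/- In the quantum GL(2) algebra at root of unity q = e^{2πi/N} (N even), with Δ defined on generators in the standard matrix fashion, one has Δ(α^{N/2}) = α^{N/2}⊗α^{N/2} + β^{N/2}⊗γ^{N/2}, i.e., the map sending the generating matrix to its entrywise N/2-th powers is comultiplicative. -/

import Mathlib

open scoped TensorProduct

/-- Gaussian binomial coefficients at parameter `c`, via the q-Pascal recursion. -/
noncomputable def gb (c : ℂ) : ℕ → ℕ → ℂ
  | 0, 0 => 1
  | 0, _ + 1 => 0
  | _ + 1, 0 => 1
  | n + 1, k + 1 => gb c n k + c ^ (k + 1) * gb c n (k + 1)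

lemma gb_zero (c : ℂ) (n : ℕ) : gb c n 0 = 1 := by cases n <;> rfl

lemma gb_eq_zero (c : ℂ) : ∀ n k, n < k → gb c n k = 0
  | 0, _ + 1, _ => rfl
  | n + 1, k + 1, h => by
      rw [gb, gb_eq_zero c n k (by omega), gb_eq_zero c n (k + 1) (by omega)]
      ring

lemma gb_diag (c : ℂ) : ∀ n, gb c n n = 1
  | 0 => rfl
  | n + 1 => by rw [gb, gb_diag c n, gb_eq_zero c n (n + 1) (by omega)]; ring

lemma gb_prod (c : ℂ) : ∀ n k, gb c n k * ∏ j ∈ Finset.range k, (c ^ (j + 1) - 1)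
    = ∏ j ∈ Finset.range k, (c ^ (n - j) - 1)
  | n, 0 => by simp [gb_zero]
  | 0, k + 1 => by
      rw [gb_eq_zero c 0 (k + 1) (by omega), zero_mul,
        Finset.prod_eq_zero (Finset.mem_range.2 (Nat.succ_pos k))]
      simp
  | n + 1, k + 1 => by
      have h1 := gb_prod c n k
      have h2 := gb_prod c n (k + 1)
      simp only [Finset.prod_range_succ] at h2
      have hkey : c ^ (k + 1) * ((c ^ (n - k) - 1) * ∏ j ∈ Finset.range k, (c ^ (n - j) - 1))
          = (c ^ (n + 1) - c ^ (k + 1)) * ∏ j ∈ Finset.range k, (c ^ (n - j) - 1) := by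
        rcases lt_or_ge k n with hk | hk
        · have hp : c ^ (k + 1) * c ^ (n - k) = c ^ (n + 1) := by
            rw [← pow_add]; congr 1; omega
          linear_combination (∏ j ∈ Finset.range k, (c ^ (n - j) - 1)) * hp
        · rcases eq_or_lt_of_le hk with hk' | hk'
          · subst hk'; simp
          · rw [Finset.prod_eq_zero (Finset.mem_range.2 hk')
              (by simp [Nat.sub_eq_zero_of_le (le_of_lt hk')])]
            ring
      rw [gb, Finset.prod_range_succ, Finset.prod_range_succ' (fun j => c ^ (n + 1 - j) - 1)]
      simp only [Nat.succ_sub_succ, Nat.sub_zero]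
      calc (gb c n k + c ^ (k + 1) * gb c n (k + 1)) *
            ((∏ j ∈ Finset.range k, (c ^ (j + 1) - 1)) * (c ^ (k + 1) - 1))
          = (gb c n k * ∏ j ∈ Finset.range k, (c ^ (j + 1) - 1)) * (c ^ (k + 1) - 1)
            + c ^ (k + 1) * (gb c n (k + 1) *
              ((∏ j ∈ Finset.range k, (c ^ (j + 1) - 1)) * (c ^ (k + 1) - 1))) := by ring
        _ = (∏ j ∈ Finset.range k, (c ^ (n - j) - 1)) * (c ^ (k + 1) - 1)
            + c ^ (k + 1) * ((∏ j ∈ Finset.range k, (c ^ (n - j) - 1)) * (c ^ (n - k) - 1)) := by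
              rw [h1, h2]
        _ = (∏ j ∈ Finset.range k, (c ^ (n - j) - 1)) * (c ^ (n + 1) - 1) := by
              linear_combination hkey

lemma y_mul_x_pow {R : Type*} [Ring R] [Algebra ℂ R] (c : ℂ) (x y : R)
    (h : y * x = c • (x * y)) (k : ℕ) : y * x ^ k = c ^ k • (x ^ k * y) := by
  induction k with
  | zero => simp
  | succ k ih =>
    rw [pow_succ, ← mul_assoc, ih, smul_mul_assoc, mul_assoc, h, mul_smul_comm,
      smul_smul, pow_succ, ← mul_assoc]

/-- The q-binomial theorem for q-commuting elements. -/
lemma q_binom {R : Type*} [Ring R] [Algebra ℂ R] (c : ℂ) (x y : R)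
    (h : y * x = c • (x * y)) (n : ℕ) :
    (x + y) ^ n = ∑ k ∈ Finset.range (n + 1), gb c n k • (x ^ k * y ^ (n - k)) := by
  induction n with
  | zero => simp [gb_zero]
  | succ n ih =>
    have hterm : ∀ k ≤ n, (x + y) * (gb c n k • (x ^ k * y ^ (n - k)))
        = gb c n k • (x ^ (k + 1) * y ^ (n - k))
          + (c ^ k * gb c n k) • (x ^ k * y ^ (n + 1 - k)) := by
      intro k hk
      have e : n + 1 - k = (n - k) + 1 := by omega
      rw [e, add_mul, mul_smul_comm, ← mul_assoc, ← pow_succ']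
      congr 1
      rw [mul_smul_comm, ← mul_assoc, y_mul_x_pow c x y h k, smul_mul_assoc, smul_smul,
        mul_comm (gb c n k) (c ^ k), mul_assoc, ← pow_succ']
    rw [pow_succ', ih, Finset.mul_sum,
      Finset.sum_congr rfl
        (fun k hk => hterm k (by simpa using Nat.lt_succ_iff.mp (Finset.mem_range.mp hk))),
      Finset.sum_add_distrib]
    rw [Finset.sum_range_succ' (fun k => gb c (n + 1) k • (x ^ k * y ^ (n + 1 - k)))]
    simp only [gb, gb_zero, Nat.succ_sub_succ, Nat.sub_zero, pow_zero, one_mul,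
      one_smul, add_smul]
    rw [Finset.sum_add_distrib]
    rw [Finset.sum_range_succ' (fun k => (c ^ k * gb c n k) • (x ^ k * y ^ (n + 1 - k)))]
    have hext : ∑ j ∈ Finset.range (n + 1), (c ^ (j + 1) * gb c n (j + 1)) •
          (x ^ (j + 1) * y ^ (n + 1 - (j + 1)))
        = ∑ j ∈ Finset.range n, (c ^ (j + 1) * gb c n (j + 1)) •
          (x ^ (j + 1) * y ^ (n + 1 - (j + 1))) := by
      rw [Finset.sum_range_succ, gb_eq_zero c n (n + 1) (by omega)]
      simp
    simp only [Nat.succ_sub_succ, Nat.sub_zero, pow_zero, one_mul, one_smul, gb_zero] at hext ⊢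
    rw [hext]
    abel

lemma root_pow_eq_one_iff (N : ℕ) (hNpos : 0 < N) (q : ℂ)
    (hq : q = Complex.exp (2 * Real.pi * Complex.I / N)) (j : ℕ) :
    (q ^ 2) ^ j = 1 ↔ (N : ℤ) ∣ 2 * j := by
  have hpi : (Real.pi : ℂ) ≠ 0 := by exact_mod_cast Real.pi_ne_zero
  have hNne : (N : ℂ) ≠ 0 := Nat.cast_ne_zero.2 hNpos.ne'
  have h2pi : (2 * Real.pi * Complex.I : ℂ) ≠ 0 := by
    simp [Complex.I_ne_zero, hpi]
  rw [hq, ← pow_mul, ← Complex.exp_nat_mul, Complex.exp_eq_one_iff]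
  constructor
  · rintro ⟨t, ht⟩
    refine ⟨t, ?_⟩
    have h3 : ((2 * j : ℕ) : ℂ) * (2 * Real.pi * Complex.I)
        = ((N : ℂ) * t) * (2 * Real.pi * Complex.I) := by
      calc ((2 * j : ℕ) : ℂ) * (2 * Real.pi * Complex.I)
          = ((2 * j : ℕ) : ℂ) * (2 * Real.pi * Complex.I / N) * N := by field_simp
        _ = (t * (2 * Real.pi * Complex.I)) * N := by rw [ht]
        _ = ((N : ℂ) * t) * (2 * Real.pi * Complex.I) := by ring
    have h2 : ((2 * j : ℕ) : ℂ) = (N : ℂ) * t := mul_right_cancel₀ h2pi h3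
    exact_mod_cast h2
  · rintro ⟨t, ht⟩
    refine ⟨t, ?_⟩
    have h2 : ((2 * j : ℕ) : ℂ) = (N : ℂ) * t := by
      exact_mod_cast congrArg (Int.cast : ℤ → ℂ) ht
    field_simp
    push_cast at h2 ⊢
    linear_combination h2

/-- In the quantum GL(2) algebra at the root of unity
q = e^{2πi/N} (N even, N ≥ 6), with the standard comultiplication
Δ(α) = α⊗α + β⊗γ etc., one has
Δ(α^{N/2}) = α^{N/2}⊗α^{N/2} + β^{N/2}⊗γ^{N/2}. -/
theorem stmt_12 (N : ℕ) (hNeven : Even N) (hN : 6 ≤ N)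
    (q : ℂ) (hq : q = Complex.exp (2 * Real.pi * Complex.I / N))
    (A : Type*) [Ring A] [Algebra ℂ A] (α β γ δ : A)
    (h1 : α * β = q ^ 2 • (β * α))
    (h2 : α * γ = γ * α)
    (h3 : γ * δ = q ^ 2 • (δ * γ))
    (h4 : β * δ = δ * β)
    (h5 : γ * β = q ^ 2 • (β * γ))
    (h6 : α * δ - δ * α = (q ^ 2 - 1) • (β * γ))
    (Δ : A →ₐ[ℂ] A ⊗[ℂ] A)
    (hΔα : Δ α = α ⊗ₜ[ℂ] α + β ⊗ₜ[ℂ] γ)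
    (hΔβ : Δ β = α ⊗ₜ[ℂ] β + β ⊗ₜ[ℂ] δ)
    (hΔγ : Δ γ = γ ⊗ₜ[ℂ] α + δ ⊗ₜ[ℂ] γ)
    (hΔδ : Δ δ = γ ⊗ₜ[ℂ] β + δ ⊗ₜ[ℂ] δ) :
    Δ (α ^ (N / 2)) = (α ^ (N / 2)) ⊗ₜ[ℂ] (α ^ (N / 2))
        + (β ^ (N / 2)) ⊗ₜ[ℂ] (γ ^ (N / 2)) := by
  obtain ⟨m', hm'⟩ := hNeven
  set m : ℕ := N / 2 with hmdef
  have hNm : N = 2 * m := by omega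
  have hm3 : 3 ≤ m := by omega
  set c : ℂ := q ^ 2 with hc
  -- c^j = 1 iff m ∣ j
  have hroot : ∀ j : ℕ, c ^ j = 1 ↔ (N : ℤ) ∣ 2 * j :=
    fun j => root_pow_eq_one_iff N (by omega) q hq j
  have hcm : c ^ m = 1 := (hroot m).2 ⟨1, by push_cast; omega⟩
  have hcj : ∀ j, 0 < j → j < m → c ^ j ≠ 1 := by
    intro j hj0 hjm hone
    obtain ⟨t, ht⟩ := (hroot j).1 hone
    have hNpos : (0:ℤ) < N := by exact_mod_cast (by omega : 0 < N)
    have h2j : (0:ℤ) < 2 * j := by exact_mod_cast (by omega : 0 < 2 * j)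
    have := Int.le_of_dvd h2j ⟨t, ht⟩
    omega
  -- vanishing of intermediate Gaussian binomials
  have hgb : ∀ k, 0 < k → k < m → gb c m k = 0 := by
    intro k hk0 hkm
    have hp := gb_prod c m k
    have hP : (∏ j ∈ Finset.range k, (c ^ (m - j) - 1)) = 0 := by
      refine Finset.prod_eq_zero (Finset.mem_range.2 hk0) ?_
      rw [Nat.sub_zero, hcm, sub_self]
    have hD : (∏ j ∈ Finset.range k, (c ^ (j + 1) - 1)) ≠ 0 := by
      rw [Finset.prod_ne_zero_iff]
      intro j hj
      have hjk := Finset.mem_range.mp hj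
      exact sub_ne_zero.2 (hcj (j + 1) (by omega) (by omega))
    rw [hP] at hp
    rcases mul_eq_zero.mp hp with h | h
    · exact h
    · exact absurd h hD
  -- the q-commuting elements in the tensor square
  set x : A ⊗[ℂ] A := β ⊗ₜ[ℂ] γ with hx
  set y : A ⊗[ℂ] A := α ⊗ₜ[ℂ] α with hy
  have hcomm : y * x = c • (x * y) := by
    rw [hx, hy, Algebra.TensorProduct.tmul_mul_tmul, Algebra.TensorProduct.tmul_mul_tmul,
      h1, h2, TensorProduct.smul_tmul']
  have hΔ : Δ (α ^ m) = (x + y) ^ m := by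
    rw [map_pow, hΔα, add_comm]
  rw [hΔ, q_binom c x y hcomm m, Finset.sum_range_succ, gb_diag,
    Finset.sum_eq_single_of_mem 0 (Finset.mem_range.2 (by omega))
      (fun b hb hb0 => by
        rw [hgb b (Nat.pos_of_ne_zero hb0) (Finset.mem_range.mp hb), zero_smul])]
  rw [gb_zero]
  simp only [Nat.sub_self, Nat.sub_zero, pow_zero, one_mul, mul_one, one_smul]
  rw [hx, hy, Algebra.TensorProduct.tmul_pow, Algebra.TensorProduct.tmul_pow]
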